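/- For every natural number k, the class of k-threshold graphs is characterized by a finite collection of forbidden induced subgraphs: there exists a finite set F of finite simple graphs such that a finite simple graph G is a k-threshold graph if and only if no graph in F is isomorphic to an induced subgraph of G. -/

import Mathlib

/-- `G` is a `k`-threshold graph: there is a coloring of the vertices with `k` colors
such that every nonempty vertex subset `W` contains a vertex `x` which is either
isolated in `W`, or whose neighbors inside `W` are exactly the vertices of `W \ {x}`
of some color `i`. -/
def IsKThreshold {V : Type*} (k : ℕ) (G : SimpleGraph V) : Prop :=
  ∃ c : V → Fin k, ∀ W : Set V, W.Nonempty →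
    ∃ x ∈ W, (∀ y ∈ W, ¬ G.Adj x y) ∨
      ∃ i : Fin k, ∀ y ∈ W, y ≠ x → (G.Adj x y ↔ c y = i)

namespace KTAux

variable {k : ℕ}

abbrev Lett (k : ℕ) := Fin k × Option (Fin k)

/-- adjacency decoded from a word -/
def adjW {n : ℕ} (w : Fin n → Lett k) (p q : Fin n) : Prop :=
  (p < q ∧ (w p).2 = some ((w q).1)) ∨ (q < p ∧ (w q).2 = some ((w p).1))

lemma adjW_comm {n : ℕ} (w : Fin n → Lett k) (p q : Fin n) :
    adjW w p q ↔ adjW w q p := by unfold adjW; tauto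

lemma adjW_irrefl {n : ℕ} (w : Fin n → Lett k) (p : Fin n) : ¬ adjW w p p := by
  unfold adjW; simp [lt_irrefl]

lemma adjW_of_orderEmbedding {a b : ℕ} (f : Fin a ↪o Fin b)
    (w₁ : Fin a → Lett k) (w₂ : Fin b → Lett k) (hw : ∀ p, w₂ (f p) = w₁ p)
    (p q : Fin a) : adjW w₁ p q ↔ adjW w₂ (f p) (f q) := by
  unfold adjW
  simp [hw, f.lt_iff_lt]

/-- `G` has a word representation over `k` colors. -/
def HasRep (k : ℕ) {V : Type*} (G : SimpleGraph V) : Prop :=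
  ∃ (n : ℕ) (w : Fin n → Lett k) (e : V ≃ Fin n),
    ∀ u v, G.Adj u v ↔ adjW w (e u) (e v)

/-- hereditarity of IsKThreshold -/
lemma isKThreshold_of_embedding {V W : Type*} {G : SimpleGraph V} {H : SimpleGraph W}
    (f : H ↪g G) (hG : IsKThreshold k G) : IsKThreshold k H := by
  obtain ⟨c, hc⟩ := hG
  refine ⟨c ∘ f, fun S hS => ?_⟩
  obtain ⟨x, hxW, hx⟩ := hc (f '' S) (hS.image f)
  obtain ⟨x₀, hx₀S, rfl⟩ := hxW
  refine ⟨x₀, hx₀S, ?_⟩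
  rcases hx with h | ⟨i, h⟩
  · left
    intro y hy hadj
    exact h (f y) ⟨y, hy, rfl⟩ (f.map_adj_iff.mpr hadj)
  · right
    refine ⟨i, fun y hy hyx => ?_⟩
    have := h (f y) ⟨y, hy, rfl⟩ (fun hh => hyx (f.injective hh))
    simpa [f.map_adj_iff] using this

lemma isKThreshold_of_rep {V : Type*} {G : SimpleGraph V} (h : HasRep k G) :
    IsKThreshold k G := by
  obtain ⟨n, w, e, he⟩ := h
  haveI : Fintype V := Fintype.ofEquiv _ e.symm
  refine ⟨fun v => (w (e v)).1, fun W hW => ?_⟩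
  obtain ⟨x, hxW, hxmin⟩ := Set.exists_min_image W (fun v => e v) (Set.toFinite W) hW
  have key : ∀ y ∈ W, y ≠ x → (G.Adj x y ↔ (w (e x)).2 = some ((w (e y)).1)) := by
    intro y hy hyx
    have hlt : e x < e y := lt_of_le_of_ne (hxmin y hy) (fun hh => hyx (e.injective hh.symm))
    rw [he]
    constructor
    · rintro (⟨-, h⟩ | ⟨h, -⟩)
      · exact h
      · exact absurd h (not_lt.mpr hlt.le)
    · intro h; exact Or.inl ⟨hlt, h⟩
  refine ⟨x, hxW, ?_⟩
  rcases hatt : (w (e x)).2 with _ | i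
  · left
    intro y hy hadj
    rcases eq_or_ne y x with rfl | hyx
    · exact G.irrefl hadj
    · rw [key y hy hyx, hatt] at hadj
      simp at hadj
  · right
    refine ⟨i, fun y hy hyx => ?_⟩
    rw [key y hy hyx, hatt]
    constructor
    · intro h; exact (Option.some_injective _ h).symm
    · intro h; simp only at h; rw [h]

end KTAux

namespace KTAux

variable {k : ℕ}

/-- the elimination property with a fixed coloring -/
def Elim {V : Type*} (k : ℕ) (G : SimpleGraph V) (c : V → Fin k) : Prop :=
  ∀ W : Set V, W.Nonempty → ∃ x ∈ W, (∀ y ∈ W, ¬ G.Adj x y) ∨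
      ∃ i : Fin k, ∀ y ∈ W, y ≠ x → (G.Adj x y ↔ c y = i)

lemma rep_of_elim : ∀ (N : ℕ) (V : Type) [Fintype V] (G : SimpleGraph V) (c : V → Fin k),
    Fintype.card V ≤ N → Elim k G c →
    ∃ (n : ℕ) (w : Fin n → Lett k) (e : V ≃ Fin n),
      (∀ u v, G.Adj u v ↔ adjW w (e u) (e v)) ∧ ∀ v, (w (e v)).1 = c v := by
  intro N
  induction N with
  | zero =>
    intro V _ G c hcard _
    haveI : IsEmpty V := Fintype.card_eq_zero_iff.mp (Nat.le_zero.mp hcard)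
    exact ⟨0, Fin.elim0, Equiv.equivOfIsEmpty V (Fin 0),
      fun u => isEmptyElim u, fun v => isEmptyElim v⟩
  | succ N ih =>
    intro V _ G c hcard hE
    classical
    rcases isEmpty_or_nonempty V with hV | hV
    · exact ⟨0, Fin.elim0, Equiv.equivOfIsEmpty V (Fin 0),
        fun u => isEmptyElim u, fun v => isEmptyElim v⟩
    obtain ⟨x, -, hx⟩ := hE Set.univ Set.univ_nonempty
    -- unified attachment spec
    have hatt : ∃ att : Option (Fin k), ∀ y, y ≠ x → (G.Adj x y ↔ att = some (c y)) := by
      rcases hx with h | ⟨i, h⟩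
      · exact ⟨none, fun y hy => by simp [h y trivial]⟩
      · refine ⟨some i, fun y hy => ?_⟩
        rw [h y trivial hy]
        exact ⟨fun hh => by rw [hh], fun hh => (Option.some_injective _ hh).symm⟩
    obtain ⟨att, hatt⟩ := hatt
    -- the smaller graph
    set V' := {y : V // y ≠ x} with hV'
    let G' : SimpleGraph V' := SimpleGraph.comap Subtype.val G
    have hcard' : Fintype.card V' ≤ N := by
      have hlt : Fintype.card V' < Fintype.card V :=
        Fintype.card_subtype_lt (x := x) (by simp)
      omega
    have hE' : Elim k G' (fun y => c y.val) := by
      intro W hW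
      obtain ⟨z, hzW, hz⟩ := hE (Subtype.val '' W) (hW.image _)
      obtain ⟨z', hz'W, rfl⟩ := hzW
      refine ⟨z', hz'W, ?_⟩
      rcases hz with h | ⟨i, h⟩
      · exact Or.inl fun y hy hadj => h y.val ⟨y, hy, rfl⟩ hadj
      · exact Or.inr ⟨i, fun y hy hyz =>
          h y.val ⟨y, hy, rfl⟩ (fun hh => hyz (Subtype.ext hh))⟩
    obtain ⟨n, w', e', he', hc'⟩ := ih V' G' (fun y => c y.val) hcard' hE'
    -- assemble
    refine ⟨n + 1, Fin.cases (c x, att) w', ?_, ?_, ?_⟩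
    · exact {
        toFun := fun v => if h : v = x then 0 else (e' ⟨v, h⟩).succ
        invFun := fun p => Fin.cases x (fun q => (e'.symm q).val) p
        left_inv := by
          intro v
          by_cases h : v = x
          · simp [h]
          · simp [h]
        right_inv := by
          intro p
          refine Fin.cases ?_ (fun q => ?_) p
          · simp
          · simp only [Fin.cases_succ]
            refine (dif_neg (e'.symm q).prop).trans ?_
            simp }
    · intro u v
      dsimp only [Equiv.coe_fn_mk]
      by_cases hu : u = x <;> by_cases hv : v = x
      · subst hu; subst hv
        simp [adjW_irrefl]
      · subst hu
        rw [dif_pos rfl, dif_neg hv]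
        have h0 : (0 : Fin (n+1)) < (e' ⟨v, hv⟩).succ := Fin.succ_pos _
        constructor
        · intro hadj
          exact Or.inl ⟨h0, by
            simp only [Fin.cases_zero, Fin.cases_succ]
            rw [hc' ⟨v, hv⟩]
            exact (hatt v hv).mp hadj⟩
        · rintro (⟨-, hh⟩ | ⟨hh, -⟩)
          · simp only [Fin.cases_zero, Fin.cases_succ] at hh
            rw [hc' ⟨v, hv⟩] at hh
            exact (hatt v hv).mpr hh
          · exact absurd hh (by simp)
      · subst hv
        rw [G.adj_comm, adjW_comm]
        rw [dif_pos rfl, dif_neg hu]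
        have h0 : (0 : Fin (n+1)) < (e' ⟨u, hu⟩).succ := Fin.succ_pos _
        constructor
        · intro hadj
          exact Or.inl ⟨h0, by
            simp only [Fin.cases_zero, Fin.cases_succ]
            rw [hc' ⟨u, hu⟩]
            exact (hatt u hu).mp hadj⟩
        · rintro (⟨-, hh⟩ | ⟨hh, -⟩)
          · simp only [Fin.cases_zero, Fin.cases_succ] at hh
            rw [hc' ⟨u, hu⟩] at hh
            exact (hatt u hu).mpr hh
          · exact absurd hh (by simp)
      · rw [dif_neg hu, dif_neg hv]
        have : G.Adj u v ↔ G'.Adj ⟨u, hu⟩ ⟨v, hv⟩ := by simp [G']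
        rw [this, he']
        unfold adjW
        simp only [Fin.cases_succ, Fin.succ_lt_succ_iff]
    · intro v
      dsimp only [Equiv.coe_fn_mk]
      by_cases h : v = x
      · subst h; rw [dif_pos rfl]; simp
      · rw [dif_neg h]
        simpa using hc' ⟨v, h⟩

end KTAux

namespace KTAux

variable {k : ℕ}

lemma isKThreshold_of_isEmpty {V : Type*} [IsEmpty V] (G : SimpleGraph V) :
    IsKThreshold k G :=
  ⟨fun v => isEmptyElim v, fun _ hW => by obtain ⟨x, -⟩ := hW; exact isEmptyElim x⟩

/-- a minimal non-k-threshold graph -/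
def MinBad (k n : ℕ) (G : SimpleGraph (Fin n)) : Prop :=
  ¬ IsKThreshold k G ∧ ∀ s : Finset (Fin n), s.card < n → IsKThreshold k (G.induce ↑s)

lemma minBad_embed {V : Type} [Fintype V] {n : ℕ} {Gn : SimpleGraph (Fin n)}
    (h : MinBad k n Gn) {H : SimpleGraph V} (f : H ↪g Gn)
    (hcard : Fintype.card V < n) : IsKThreshold k H := by
  classical
  set s : Finset (Fin n) := Finset.univ.image f with hs
  have hscard : s.card < n := by
    rw [hs, Finset.card_image_of_injective _ f.injective]
    simpa using hcard
  refine isKThreshold_of_embedding ?_ (h.2 s hscard)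
  exact {
    toFun := fun x => ⟨f x, by simp [hs]⟩
    inj' := fun a b hab => f.injective (congrArg Subtype.val hab)
    map_rel_iff' := by
      intro a b
      simp only [SimpleGraph.comap_adj, Function.Embedding.coe_subtype,
        Function.Embedding.coeFn_mk]
      exact f.map_adj_iff }

lemma exists_minBad : ∀ (N : ℕ) (V : Type) [Fintype V] (G : SimpleGraph V),
    Fintype.card V ≤ N → ¬ IsKThreshold k G →
    ∃ (n : ℕ) (B : SimpleGraph (Fin n)), MinBad k n B ∧ Nonempty (B ↪g G) := by
  intro N
  induction N with
  | zero =>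
    intro V _ G hcard hG
    haveI : IsEmpty V := Fintype.card_eq_zero_iff.mp (Nat.le_zero.mp hcard)
    exact absurd (isKThreshold_of_isEmpty G) hG
  | succ N ih =>
    intro V _ G hcard hG
    classical
    set n := Fintype.card V with hn
    set eV := Fintype.equivFin V with heV
    set G' : SimpleGraph (Fin n) := SimpleGraph.comap eV.symm G with hG'def
    have iso : G' ≃g G := ⟨eV.symm, Iff.rfl⟩
    have hG' : ¬ IsKThreshold k G' := fun h =>
      hG (isKThreshold_of_embedding iso.symm.toEmbedding h)
    by_cases hmin : ∀ s : Finset (Fin n), s.card < n → IsKThreshold k (G'.induce ↑s)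
    · exact ⟨n, G', ⟨hG', hmin⟩, ⟨iso.toEmbedding⟩⟩
    · push_neg at hmin
      obtain ⟨s, hscard, hsbad⟩ := hmin
      have hcard' : Fintype.card ↥(↑s : Set (Fin n)) ≤ N := by
        have : Fintype.card ↥(↑s : Set (Fin n)) = s.card := Fintype.card_coe s
        omega
      obtain ⟨n', B, hB, ⟨emb⟩⟩ := ih ↥(↑s : Set (Fin n)) (G'.induce ↑s) hcard' hsbad
      exact ⟨n', B, hB,
        ⟨iso.toEmbedding.comp ((SimpleGraph.Embedding.induce (↑s : Set (Fin n))).comp emb)⟩⟩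

lemma pwo_univ {α : Type*} [Finite α] :
    (Set.univ : Set α).PartiallyWellOrderedOn (· = ·) := by
  intro f
  obtain ⟨a, b, hab, h⟩ := Finite.exists_ne_map_eq_of_infinite f
  rcases hab.lt_or_gt with h' | h'
  exacts [⟨a, b, h', congrArg Subtype.val h⟩, ⟨b, a, h', congrArg Subtype.val h.symm⟩]

/-- key lemma: compatible marked-word data yields a graph embedding -/
lemma embed_of_words {n₁ n₂ : ℕ} (G₁ : SimpleGraph (Fin n₁)) (G₂ : SimpleGraph (Fin n₂))
    (v₁ : Fin n₁) (v₂ : Fin n₂) {m₁ m₂ : ℕ}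
    (w₁ : Fin m₁ → Lett k × Bool) (w₂ : Fin m₂ → Lett k × Bool)
    (e₁ : {x : Fin n₁ // x ≠ v₁} ≃ Fin m₁) (e₂ : {x : Fin n₂ // x ≠ v₂} ≃ Fin m₂)
    (h₁ : ∀ u v : {x : Fin n₁ // x ≠ v₁},
      G₁.Adj u.val v.val ↔ adjW (fun p => (w₁ p).1) (e₁ u) (e₁ v))
    (h₂ : ∀ u v : {x : Fin n₂ // x ≠ v₂},
      G₂.Adj u.val v.val ↔ adjW (fun p => (w₂ p).1) (e₂ u) (e₂ v))
    (hm₁ : ∀ u : {x : Fin n₁ // x ≠ v₁}, G₁.Adj v₁ u.val ↔ (w₁ (e₁ u)).2 = true)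
    (hm₂ : ∀ u : {x : Fin n₂ // x ≠ v₂}, G₂.Adj v₂ u.val ↔ (w₂ (e₂ u)).2 = true)
    (F : Fin m₁ ↪o Fin m₂) (hF : ∀ p, w₂ (F p) = w₁ p) :
    Nonempty (G₁ ↪g G₂) := by
  classical
  set φ : Fin n₁ → Fin n₂ :=
    fun x => if h : x = v₁ then v₂ else (e₂.symm (F (e₁ ⟨x, h⟩))).val with hφ
  have hv : φ v₁ = v₂ := by simp [hφ]
  have ho : ∀ (x) (h : x ≠ v₁), φ x = (e₂.symm (F (e₁ ⟨x, h⟩))).val := by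
    intro x h
    simp only [hφ]
    rw [dif_neg h]
  have hinj : Function.Injective φ := by
    intro a b hab
    by_cases ha : a = v₁ <;> by_cases hb : b = v₁
    · rw [ha, hb]
    · rw [ha, hv, ho b hb] at hab
      exact absurd hab.symm (e₂.symm _).prop
    · rw [hb, hv, ho a ha] at hab
      exact absurd hab (e₂.symm _).prop
    · rw [ho a ha, ho b hb] at hab
      have := e₁.injective (F.injective (e₂.symm.injective (Subtype.ext hab)))
      simpa using this
  have hrel : ∀ a b, G₂.Adj (φ a) (φ b) ↔ G₁.Adj a b := by
    have key : ∀ u : {x : Fin n₁ // x ≠ v₁},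
        G₂.Adj v₂ (e₂.symm (F (e₁ u))).val ↔ G₁.Adj v₁ u.val := by
      intro u
      rw [hm₂ (e₂.symm (F (e₁ u))), hm₁ u, Equiv.apply_symm_apply, hF]
    intro a b
    by_cases ha : a = v₁ <;> by_cases hb : b = v₁
    · rw [ha, hb, hv]
      simp
    · rw [ha, hv, ho b hb]
      exact key ⟨b, hb⟩
    · rw [hb, hv, ho a ha, G₁.adj_comm, G₂.adj_comm]
      exact key ⟨a, ha⟩
    · rw [ho a ha, ho b hb]
      have lhs : G₂.Adj (e₂.symm (F (e₁ ⟨a, ha⟩))).val (e₂.symm (F (e₁ ⟨b, hb⟩))).val ↔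
          adjW (fun p => (w₂ p).1) (F (e₁ ⟨a, ha⟩)) (F (e₁ ⟨b, hb⟩)) := by
        rw [h₂]
        simp
      rw [lhs, ← adjW_of_orderEmbedding F (fun p => (w₁ p).1) (fun p => (w₂ p).1)
        (fun p => by simp [hF]), ← h₁]
  exact ⟨⟨⟨φ, hinj⟩, hrel _ _⟩⟩

end KTAux

namespace KTAux

variable {k : ℕ}

lemma get_ofFn_val {α : Type*} {n : ℕ} (f : Fin n → α) (a : Fin (List.ofFn f).length)
    (b : Fin n) (hab : (a : ℕ) = (b : ℕ)) : (List.ofFn f).get a = f b := by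
  rw [List.get_ofFn]
  congr 1
  ext
  simpa using hab

lemma minBad_bound (k : ℕ) : ∃ N : ℕ, ∀ n (G : SimpleGraph (Fin n)), MinBad k n G → n ≤ N := by
  by_contra hcon
  push_neg at hcon
  classical
  have h' : ∀ N : ℕ, ∃ p : {p : (n : ℕ) × SimpleGraph (Fin n) // MinBad k p.1 p.2},
      N < p.1.1 := by
    intro N; obtain ⟨n, G, hm, hn⟩ := hcon N; exact ⟨⟨⟨n, G⟩, hm⟩, hn⟩
  let g : ℕ → {p : (n : ℕ) × SimpleGraph (Fin n) // MinBad k p.1 p.2} :=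
    fun n => Nat.rec (Classical.choose (h' 0)) (fun _ p => Classical.choose (h' p.1.1)) n
  have hg0 : 0 < (g 0).1.1 := Classical.choose_spec (h' 0)
  have hgs : ∀ n, (g n).1.1 < (g (n + 1)).1.1 := fun n => Classical.choose_spec (h' (g n).1.1)
  have hmono : StrictMono fun n => (g n).1.1 := strictMono_nat_of_lt_succ hgs
  have hpos : ∀ n, 0 < (g n).1.1 := fun n => lt_of_lt_of_le hg0 (hmono.monotone (Nat.zero_le n))
  have hrep : ∀ j : ℕ, ∃ (m : ℕ) (w : Fin m → Lett k)
      (e : {x : Fin (g j).1.1 // x ≠ ⟨0, hpos j⟩} ≃ Fin m),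
      ∀ u v : {x : Fin (g j).1.1 // x ≠ ⟨0, hpos j⟩},
        (g j).1.2.Adj u.val v.val ↔ adjW w (e u) (e v) := by
    intro j
    have hth : IsKThreshold k (SimpleGraph.comap
        (Subtype.val : {x : Fin (g j).1.1 // x ≠ ⟨0, hpos j⟩} → Fin (g j).1.1) (g j).1.2) := by
      refine minBad_embed (g j).2
        ⟨⟨Subtype.val, Subtype.val_injective⟩, Iff.rfl⟩ ?_
      have := Fintype.card_subtype_lt (p := fun x : Fin (g j).1.1 => x ≠ ⟨0, hpos j⟩)
        (x := ⟨0, hpos j⟩) (by simp)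
      simpa using this
    obtain ⟨c, hc⟩ := hth
    obtain ⟨m, w, e, hwe, -⟩ := rep_of_elim (Fintype.card _) _ _ c le_rfl hc
    exact ⟨m, w, e, fun u v => hwe u v⟩
  choose m w e hw using hrep
  let mw : ∀ j, Fin (m j) → Lett k × Bool := fun j p =>
    (w j p, if (g j).1.2.Adj ⟨0, hpos j⟩ ((e j).symm p).val then true else false)
  haveI : IsRefl (Lett k × Bool) (· = ·) := ⟨fun _ => rfl⟩
  haveI : IsTrans (Lett k × Bool) (· = ·) := ⟨fun _ _ _ h h' => h.trans h'⟩
  have hpwo := (pwo_univ (α := Lett k × Bool)).partiallyWellOrderedOn_sublistForall₂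
    (r := (· = ·))
  obtain ⟨i, j, hij, hsub⟩ := hpwo (fun j => ⟨List.ofFn (mw j), fun x _ => Set.mem_univ x⟩)
  change List.SublistForall₂ (· = ·) (List.ofFn (mw i)) (List.ofFn (mw j)) at hsub
  rw [List.sublistForall₂_iff] at hsub
  obtain ⟨l, hfor, hsl⟩ := hsub
  rw [List.forall₂_eq_eq_eq] at hfor
  subst hfor
  obtain ⟨f, hf⟩ := List.sublist_iff_exists_fin_orderEmbedding_get_eq.mp hsl
  let ci : Fin (m i) ≃o Fin (List.ofFn (mw i)).length :=
    Fin.castOrderIso List.length_ofFn.symm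
  let cj : Fin (List.ofFn (mw j)).length ≃o Fin (m j) :=
    Fin.castOrderIso List.length_ofFn
  let F : Fin (m i) ↪o Fin (m j) := (ci.toOrderEmbedding.trans f).trans cj.toOrderEmbedding
  have hF : ∀ p, mw j (F p) = mw i p := by
    intro p
    have h1 : (List.ofFn (mw i)).get (ci p) = mw i p :=
      get_ofFn_val (mw i) (ci p) p (by simp [ci])
    have h2 : (List.ofFn (mw j)).get (f (ci p)) = mw j (F p) :=
      get_ofFn_val (mw j) (f (ci p)) (F p) (by simp [F, cj])
    rw [← h1, ← h2]
    exact (hf (ci p)).symm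
  have hmk : ∀ (j' : ℕ) (u : {x : Fin (g j').1.1 // x ≠ ⟨0, hpos j'⟩}),
      (g j').1.2.Adj ⟨0, hpos j'⟩ u.val ↔ (mw j' (e j' u)).2 = true := by
    intro j' u
    simp only [mw, Equiv.symm_apply_apply]
    by_cases h : (g j').1.2.Adj ⟨0, hpos j'⟩ u.val <;> simp [h]
  obtain ⟨emb⟩ := embed_of_words (g i).1.2 (g j).1.2 ⟨0, hpos i⟩ ⟨0, hpos j⟩
    (mw i) (mw j) (e i) (e j) (fun u v => hw i u v) (fun u v => hw j u v)
    (hmk i) (hmk j) F hF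
  have hth : IsKThreshold k (g i).1.2 := by
    refine minBad_embed (g j).2 emb ?_
    simpa using hmono hij
  exact (g i).2.1 hth

end KTAux


/-- For every natural number `k`, the class of `k`-threshold graphs is characterized by a
finite collection of forbidden induced subgraphs: there is a finite list `F` of finite
simple graphs such that a finite simple graph `G` is `k`-threshold iff no graph of `F`
is isomorphic to an induced subgraph of `G` (i.e. no graph of `F` embeds into `G`). -/
theorem kThreshold_finitely_many_obstructions (k : ℕ) :
    ∃ F : List ((n : ℕ) × SimpleGraph (Fin n)),
      ∀ (V : Type) [Fintype V] (G : SimpleGraph V),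
        IsKThreshold k G ↔ ∀ H ∈ F, IsEmpty (H.2 ↪g G) := by
  classical
  obtain ⟨N, hN⟩ := KTAux.minBad_bound k
  set S : Set ((n : ℕ) × SimpleGraph (Fin n)) :=
    {p | p.1 ≤ N ∧ ¬ IsKThreshold k p.2} with hS
  have hSfin : S.Finite := by
    refine Set.Finite.subset (Set.Finite.biUnion (Set.finite_Iic N)
      (fun m _ => (Set.finite_univ (α := SimpleGraph (Fin m))).image (Sigma.mk m))) ?_
    rintro ⟨n, G⟩ ⟨h1, -⟩
    exact Set.mem_biUnion h1 ⟨G, trivial, rfl⟩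
  refine ⟨hSfin.toFinset.toList, ?_⟩
  have hmem : ∀ H, H ∈ hSfin.toFinset.toList ↔ H ∈ S := by
    intro H
    rw [Finset.mem_toList, Set.Finite.mem_toFinset]
  intro V _ G
  constructor
  · intro hG H hHF
    rw [hmem] at hHF
    exact ⟨fun f => hHF.2 (KTAux.isKThreshold_of_embedding f hG)⟩
  · intro hF
    by_contra hG
    obtain ⟨n, B, hB, ⟨emb⟩⟩ := KTAux.exists_minBad (Fintype.card V) V G le_rfl hG
    have hBmem : (⟨n, B⟩ : (n : ℕ) × SimpleGraph (Fin n)) ∈ hSfin.toFinset.toList := by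
      rw [hmem]
      exact ⟨hN n B hB, hB.1⟩
    exact (hF ⟨n, B⟩ hBmem).false emb
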